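/- arXiv:2006.05739 — 2 statements merged into one kernel-verified Lean document; each statement's English description precedes it below -/
import Mathlib

section
/- If f : (0,∞) → (0,∞) is operator concave, i.e., for every n, all positive definite complex Hermitian n×n matrices A and B, and every real p with 0 ≤ p ≤ 1 one has f(pA + (1-p)B) ≥ p f(A) + (1-p) f(B) in the Loewner order, then f is operator monotone: for all positive definite Hermitian matrices A ≤ B, one has f(A) ≤ f(B). -/
open Matrix ComplexOrder

/-- Functional calculus for (Hermitian) matrices: apply `f` to each eigenvalue. -/
noncomputable def herCFC {n : ℕ} (f : ℝ → ℝ) (A : Matrix (Fin n) (Fin n) ℂ) :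
    Matrix (Fin n) (Fin n) ℂ :=
  if h : A.IsHermitian then
    (h.eigenvectorUnitary : Matrix (Fin n) (Fin n) ℂ) *
      Matrix.diagonal (fun i => (f (h.eigenvalues i) : ℂ)) *
      (star (h.eigenvectorUnitary : Matrix (Fin n) (Fin n) ℂ))
  else 0


lemma herCFC_posSemidef {n : ℕ} (f : ℝ → ℝ) (hpos : ∀ x : ℝ, 0 < x → 0 < f x)
    {A : Matrix (Fin n) (Fin n) ℂ} (hA : A.PosDef) : (herCFC f A).PosSemidef := by
  rw [herCFC, dif_pos hA.isHermitian]
  rw [Matrix.star_eq_conjTranspose]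
  exact (Matrix.posSemidef_diagonal_iff.mpr (fun i => by
    simpa using (hpos _ (hA.eigenvalues_pos i)).le)).mul_mul_conjTranspose_same _

lemma smul_posSemidef {n : ℕ} {c : ℝ} (hc : 0 ≤ c) {M : Matrix (Fin n) (Fin n) ℂ}
    (hM : M.PosSemidef) : ((c : ℂ) • M).PosSemidef := by
  refine Matrix.posSemidef_iff_dotProduct_mulVec.mpr ⟨?_, ?_⟩
  · rw [Matrix.IsHermitian, Matrix.conjTranspose_smul, hM.1.eq]; simp [Complex.conj_ofReal]
  · intro x
    rw [Matrix.smul_mulVec, dotProduct_smul]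
    exact mul_nonneg (by exact_mod_cast hc) (hM.dotProduct_mulVec_nonneg x)

lemma smul_posDef {n : ℕ} {c : ℝ} (hc : 0 < c) {M : Matrix (Fin n) (Fin n) ℂ}
    (hM : M.PosDef) : ((c : ℂ) • M).PosDef := by
  refine Matrix.posDef_iff_dotProduct_mulVec.mpr ⟨?_, ?_⟩
  · rw [Matrix.IsHermitian, Matrix.conjTranspose_smul, hM.1.eq]; simp [Complex.conj_ofReal]
  · intro x hx
    rw [Matrix.smul_mulVec, dotProduct_smul]
    exact mul_pos (by exact_mod_cast hc) (hM.dotProduct_mulVec_pos hx)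

/-- `f : (0,∞) → (0,∞)` is operator monotone. -/
def OperatorMonotone (f : ℝ → ℝ) : Prop :=
  (∀ x : ℝ, 0 < x → 0 < f x) ∧
  ∀ (n : ℕ) (A B : Matrix (Fin n) (Fin n) ℂ), A.PosDef → B.PosDef →
    (B - A).PosSemidef → (herCFC f B - herCFC f A).PosSemidef

/-- every operator concave function `f : (0,∞) → (0,∞)` is operator
monotone. -/
theorem stmt13 (f : ℝ → ℝ) (hpos : ∀ x : ℝ, 0 < x → 0 < f x)
    (hconc : ∀ (n : ℕ) (A B : Matrix (Fin n) (Fin n) ℂ), A.PosDef → B.PosDef →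
      ∀ (p : ℝ), 0 ≤ p → p ≤ 1 →
        (herCFC f (((p : ℝ) : ℂ) • A + (((1 - p : ℝ)) : ℂ) • B) -
          (((p : ℝ) : ℂ) • herCFC f A + (((1 - p : ℝ)) : ℂ) • herCFC f B)).PosSemidef) :
    OperatorMonotone f := by
  refine ⟨hpos, ?_⟩
  intro n A B hA hB hBA
  have hMA := herCFC_posSemidef f hpos hA
  have hMB := herCFC_posSemidef f hpos hB
  set M := herCFC f B with hM
  set N := herCFC f A with hN
  have key : ∀ p : ℝ, 0 ≤ p → p < 1 → (M - ((p:ℝ):ℂ) • N).PosSemidef := by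
    intro p hp0 hp1
    have h1p : (0:ℝ) < 1 - p := by linarith
    set C : Matrix (Fin n) (Fin n) ℂ := (((1-p)⁻¹ : ℝ) : ℂ) • (B - ((p:ℝ):ℂ) • A) with hCdef
    have hBpA : (B - ((p:ℝ):ℂ) • A).PosDef := by
      have he : B - ((p:ℝ):ℂ) • A = (((1-p):ℝ):ℂ) • A + (B - A) := by
        push_cast
        rw [sub_smul, one_smul]
        abel
      rw [he]
      exact Matrix.PosDef.add_posSemidef (smul_posDef h1p hA) hBA
    have hC : C.PosDef := smul_posDef (inv_pos.mpr h1p) hBpA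
    have heq : ((p:ℝ):ℂ) • A + (((1-p):ℝ):ℂ) • C = B := by
      rw [hCdef, smul_smul]
      have h2 : (((1-p):ℝ):ℂ) * (((1-p)⁻¹:ℝ):ℂ) = 1 := by
        rw [← Complex.ofReal_mul, mul_inv_cancel₀ h1p.ne']
        simp
      rw [h2, one_smul]
      abel
    have h1 := hconc n A C hA hC p hp0 hp1.le
    rw [heq] at h1
    have h2 := smul_posSemidef h1p.le (herCFC_posSemidef f hpos hC)
    have h3 := h1.add h2
    have e : M - (((p:ℝ):ℂ) • N + (((1-p):ℝ):ℂ) • herCFC f C) + (((1-p):ℝ):ℂ) • herCFC f C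
        = M - ((p:ℝ):ℂ) • N := by abel
    rwa [e] at h3
  refine Matrix.posSemidef_iff_dotProduct_mulVec.mpr ⟨hMB.1.sub hMA.1, ?_⟩
  intro x
  set a := dotProduct (star x) (M *ᵥ x) with ha
  set b := dotProduct (star x) (N *ᵥ x) with hb
  have hbnn : 0 ≤ b := hMA.dotProduct_mulVec_nonneg x
  have key' : ∀ p : ℝ, 0 ≤ p → p < 1 → 0 ≤ a - ((p:ℝ):ℂ) * b := by
    intro p h0 h1
    have h := (key p h0 h1).dotProduct_mulVec_nonneg x
    rwa [Matrix.sub_mulVec, dotProduct_sub, Matrix.smul_mulVec,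
      dotProduct_smul, smul_eq_mul, ← ha, ← hb] at h
  have hgoal : 0 ≤ a - b := by
    have ha0 : 0 ≤ a := by simpa using key' 0 le_rfl one_pos
    rw [Complex.le_def] at ha0 hbnn ⊢
    simp only [Complex.zero_re, Complex.zero_im, Complex.sub_re, Complex.sub_im] at *
    obtain ⟨har, hai⟩ := ha0
    obtain ⟨hbr, hbi⟩ := hbnn
    refine ⟨?_, by rw [← hai, ← hbi]; ring⟩
    have hre : ∀ p : ℝ, 0 ≤ p → p < 1 → p * b.re ≤ a.re := by
      intro p h0 h1
      have h := key' p h0 h1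
      rw [Complex.le_def] at h
      have := h.1
      simp only [Complex.zero_re, Complex.sub_re, Complex.mul_re, Complex.ofReal_re,
        Complex.ofReal_im, zero_mul, sub_zero] at this
      linarith
    rw [sub_nonneg]
    by_contra hcon
    push_neg at hcon
    have hbpos : 0 < b.re := lt_of_le_of_lt har hcon
    have hp0 : 0 ≤ (a.re / b.re + 1) / 2 := by positivity
    have hp1 : (a.re / b.re + 1) / 2 < 1 := by
      have : a.re / b.re < 1 := (div_lt_one hbpos).mpr hcon
      linarith
    have := hre _ hp0 hp1
    rw [div_mul_eq_mul_div, ← sub_nonneg] at this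
    have h2 : a.re / b.re * b.re = a.re := div_mul_cancel₀ _ hbpos.ne'
    nlinarith
  rwa [Matrix.sub_mulVec, dotProduct_sub, ← ha, ← hb]
end

section
/- Let f : (0,∞) → (0,∞) be operator monotone and let f'(x) = x · f(1/x) be its transpose. Then for all positive definite complex Hermitian n×n matrices A and B, one has A m_f B = B m_{f'} A; equivalently, A^{1/2} f(A^{-1/2} B A^{-1/2}) A^{1/2} = B^{1/2} f'(B^{-1/2} A B^{-1/2}) B^{1/2}. -/
open Matrix ComplexOrder

/-- The square root `A^{1/2}` of a (positive semidefinite Hermitian) matrix. -/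
noncomputable def matSqrt {n : ℕ} (A : Matrix (Fin n) (Fin n) ℂ) :
    Matrix (Fin n) (Fin n) ℂ :=
  herCFC Real.sqrt A

/-- The operator mean `A m_f B = A^{1/2} · f (A^{-1/2} B A^{-1/2}) · A^{1/2}`. -/
noncomputable def matMean {n : ℕ} (f : ℝ → ℝ) (A B : Matrix (Fin n) (Fin n) ℂ) :
    Matrix (Fin n) (Fin n) ℂ :=
  matSqrt A * herCFC f ((matSqrt A)⁻¹ * B * (matSqrt A)⁻¹) * matSqrt A

section Aux

open Polynomial

variable {n : ℕ}

lemma aux_aeval_diagonal (q : ℂ[X]) (d : Fin n → ℂ) :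
    aeval (Matrix.diagonal d) q = Matrix.diagonal (fun i => q.eval (d i)) := by
  have h1 : Matrix.diagonal d = Matrix.diagonalAlgHom (n := Fin n) ℂ d := rfl
  rw [h1, aeval_algHom_apply]
  have h2 : (aeval d) q = fun i => q.eval (d i) := by
    funext i
    have := aeval_algHom_apply (Pi.evalAlgHom ℂ (fun _ : Fin n => ℂ) i) d q
    simpa [Polynomial.coe_aeval_eq_eval] using this.symm
  rw [h2]; rfl

lemma aux_aeval_conj (q : ℂ[X]) (U M : Matrix (Fin n) (Fin n) ℂ)
    (h1 : U * star U = 1) (h2 : star U * U = 1) :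
    aeval (U * M * star U) q = U * aeval M q * star U := by
  induction q using Polynomial.induction_on with
  | C c =>
      simp only [aeval_C, Algebra.algebraMap_eq_smul_one]
      rw [Matrix.mul_smul, Matrix.smul_mul, mul_one, h1]
  | add p r hp hr => rw [map_add, map_add, hp, hr, Matrix.mul_add, Matrix.add_mul]
  | monomial k c ih =>
      rw [pow_succ, ← mul_assoc, _root_.map_mul _ (C c * X ^ k) X,
        _root_.map_mul _ (C c * X ^ k) X, ih, aeval_X, aeval_X,
        show U * (aeval M) (C c * X ^ k) * star U * (U * M * star U)
          = U * ((aeval M) (C c * X ^ k) * (star U * U) * M) * star U by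
            simp only [mul_assoc],
        h2, mul_one]

lemma aux_aeval_comm (q : ℂ[X]) (T : Matrix (Fin n) (Fin n) ℂ) :
    T * aeval (star T * T) q = aeval (T * star T) q * T := by
  induction q using Polynomial.induction_on with
  | C c =>
      simp only [aeval_C, Algebra.algebraMap_eq_smul_one]
      rw [Matrix.mul_smul, Matrix.smul_mul, mul_one, one_mul]
  | add p r hp hr => rw [map_add, map_add, Matrix.mul_add, Matrix.add_mul, hp, hr]
  | monomial k c ih =>
      rw [pow_succ, ← mul_assoc, _root_.map_mul _ (C c * X ^ k) X,
        _root_.map_mul _ (C c * X ^ k) X, aeval_X, aeval_X, ← mul_assoc, ← mul_assoc, ih]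
      simp only [mul_assoc]

lemma aux_diag_real_conjT (d : Fin n → ℝ) :
    (Matrix.diagonal (fun i => (d i : ℂ)))ᴴ = Matrix.diagonal (fun i => (d i : ℂ)) := by
  have h : (star fun i => ((d i : ℂ))) = fun i => ((d i : ℂ)) :=
    funext fun i => Complex.conj_ofReal _
  rw [Matrix.diagonal_conjTranspose, h]

lemma aux_herCFC_of_isHermitian (f : ℝ → ℝ) {A : Matrix (Fin n) (Fin n) ℂ}
    (hA : A.IsHermitian) :
    herCFC f A = (hA.eigenvectorUnitary : Matrix (Fin n) (Fin n) ℂ) *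
      Matrix.diagonal (fun i => (f (hA.eigenvalues i) : ℂ)) *
      (star (hA.eigenvectorUnitary : Matrix (Fin n) (Fin n) ℂ)) := dif_pos hA

lemma aux_spectral {A : Matrix (Fin n) (Fin n) ℂ} (hA : A.IsHermitian) :
    A = (hA.eigenvectorUnitary : Matrix (Fin n) (Fin n) ℂ) *
      Matrix.diagonal (fun i => ((hA.eigenvalues i : ℝ) : ℂ)) *
      (star (hA.eigenvectorUnitary : Matrix (Fin n) (Fin n) ℂ)) := hA.spectral_theorem

lemma aux_exists_interp (s : Finset ℝ) (f : ℝ → ℝ) :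
    ∃ q : ℂ[X], ∀ x ∈ s, q.eval (x : ℂ) = (f x : ℂ) := by
  refine ⟨Lagrange.interpolate s (fun x : ℝ => (x : ℂ)) (fun x => (f x : ℂ)), fun x hx => ?_⟩
  exact Lagrange.eval_interpolate_at_node _ (fun a _ b _ h => by exact_mod_cast h) hx

lemma aux_conj_diag_isHermitian (V : Matrix (Fin n) (Fin n) ℂ) (d : Fin n → ℝ) :
    (V * Matrix.diagonal (fun i => (d i : ℂ)) * star V).IsHermitian := by
  simp only [Matrix.IsHermitian, Matrix.star_eq_conjTranspose, Matrix.conjTranspose_mul,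
    Matrix.conjTranspose_conjTranspose, aux_diag_real_conjT, Matrix.mul_assoc]

lemma aux_herCFC_eq_aeval (f : ℝ → ℝ) {A : Matrix (Fin n) (Fin n) ℂ} (hA : A.IsHermitian)
    (q : ℂ[X]) (hq : ∀ i, q.eval ((hA.eigenvalues i : ℝ) : ℂ) = (f (hA.eigenvalues i) : ℂ)) :
    herCFC f A = aeval A q := by
  have hU1 : (hA.eigenvectorUnitary : Matrix (Fin n) (Fin n) ℂ) *
      star (hA.eigenvectorUnitary : Matrix (Fin n) (Fin n) ℂ) = 1 :=
    Matrix.mem_unitaryGroup_iff.mp hA.eigenvectorUnitary.2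
  have hU2 : star (hA.eigenvectorUnitary : Matrix (Fin n) (Fin n) ℂ) *
      (hA.eigenvectorUnitary : Matrix (Fin n) (Fin n) ℂ) = 1 :=
    Matrix.mem_unitaryGroup_iff'.mp hA.eigenvectorUnitary.2
  conv_rhs => rw [aux_spectral hA]
  rw [aux_aeval_conj q _ _ hU1 hU2, aux_aeval_diagonal, aux_herCFC_of_isHermitian f hA]
  have : (fun i => q.eval ((hA.eigenvalues i : ℝ) : ℂ)) =
      fun i => (f (hA.eigenvalues i) : ℂ) := funext fun i => hq i
  rw [this]

lemma aux_herCFC_unitary_diag (f : ℝ → ℝ) (V : Matrix (Fin n) (Fin n) ℂ)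
    (h1 : V * star V = 1) (h2 : star V * V = 1) (d : Fin n → ℝ) :
    herCFC f (V * Matrix.diagonal (fun i => (d i : ℂ)) * star V)
      = V * Matrix.diagonal (fun i => (f (d i) : ℂ)) * star V := by
  have hA := aux_conj_diag_isHermitian V d
  obtain ⟨q, hq⟩ := aux_exists_interp
    ((Finset.image hA.eigenvalues Finset.univ) ∪ (Finset.image d Finset.univ)) f
  rw [aux_herCFC_eq_aeval f hA q (fun i => hq _
      (Finset.mem_union_left _ (Finset.mem_image_of_mem _ (Finset.mem_univ i)))),
    aux_aeval_conj q _ _ h1 h2, aux_aeval_diagonal]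
  have : (fun i => q.eval ((d i : ℂ))) = fun i => ((f (d i) : ℂ)) :=
    funext fun i => hq _
      (Finset.mem_union_right _ (Finset.mem_image_of_mem _ (Finset.mem_univ i)))
  rw [this]

lemma aux_herCFC_comm (f : ℝ → ℝ) (T : Matrix (Fin n) (Fin n) ℂ) :
    T * herCFC f (star T * T) = herCFC f (T * star T) * T := by
  have h1 : (star T * T).IsHermitian := by
    rw [Matrix.star_eq_conjTranspose]; exact Matrix.isHermitian_conjTranspose_mul_self T
  have h2 : (T * star T).IsHermitian := by
    rw [Matrix.star_eq_conjTranspose]; exact Matrix.isHermitian_mul_conjTranspose_self T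
  obtain ⟨q, hq⟩ := aux_exists_interp
    ((Finset.image h1.eigenvalues Finset.univ) ∪ (Finset.image h2.eigenvalues Finset.univ)) f
  rw [aux_herCFC_eq_aeval f h1 q (fun i => hq _
      (Finset.mem_union_left _ (Finset.mem_image_of_mem _ (Finset.mem_univ i)))),
    aux_herCFC_eq_aeval f h2 q (fun i => hq _
      (Finset.mem_union_right _ (Finset.mem_image_of_mem _ (Finset.mem_univ i)))),
    aux_aeval_comm]

lemma aux_herCFC_isHermitian (f : ℝ → ℝ) {A : Matrix (Fin n) (Fin n) ℂ}
    (hA : A.IsHermitian) : (herCFC f A).IsHermitian := by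
  rw [aux_herCFC_of_isHermitian f hA]
  exact aux_conj_diag_isHermitian _ _

lemma aux_matSqrt_mul_self {A : Matrix (Fin n) (Fin n) ℂ} (hA : A.PosDef) :
    matSqrt A * matSqrt A = A := by
  rw [matSqrt, aux_herCFC_of_isHermitian Real.sqrt hA.1]
  have hU2 : star (hA.1.eigenvectorUnitary : Matrix (Fin n) (Fin n) ℂ) *
      (hA.1.eigenvectorUnitary : Matrix (Fin n) (Fin n) ℂ) = 1 :=
    Matrix.mem_unitaryGroup_iff'.mp hA.1.eigenvectorUnitary.2
  set U := (hA.1.eigenvectorUnitary : Matrix (Fin n) (Fin n) ℂ)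
  set D := Matrix.diagonal (fun i => ((Real.sqrt (hA.1.eigenvalues i) : ℝ) : ℂ))
  calc U * D * star U * (U * D * star U)
      = U * (D * (star U * U) * D) * star U := by simp only [Matrix.mul_assoc]
    _ = U * (D * D) * star U := by rw [hU2, mul_one]
    _ = U * Matrix.diagonal (fun i => ((hA.1.eigenvalues i : ℝ) : ℂ)) * star U := by
        have he : (fun i => ((Real.sqrt (hA.1.eigenvalues i) : ℝ) : ℂ) *
            ((Real.sqrt (hA.1.eigenvalues i) : ℝ) : ℂ)) =
            fun i => ((hA.1.eigenvalues i : ℝ) : ℂ) := funext fun i => by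
          rw [← Complex.ofReal_mul, Real.mul_self_sqrt (hA.eigenvalues_pos i).le]
        rw [show D = Matrix.diagonal (fun i => ((Real.sqrt (hA.1.eigenvalues i) : ℝ) : ℂ)) from rfl,
          Matrix.diagonal_mul_diagonal, he]
    _ = A := (aux_spectral hA.1).symm

lemma aux_matSqrt_isHermitian {A : Matrix (Fin n) (Fin n) ℂ} (hA : A.PosDef) :
    (matSqrt A).IsHermitian := aux_herCFC_isHermitian Real.sqrt hA.1

lemma aux_matSqrt_det_isUnit {A : Matrix (Fin n) (Fin n) ℂ} (hA : A.PosDef) :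
    IsUnit (matSqrt A).det := by
  have h : (matSqrt A).det * (matSqrt A).det = A.det := by
    rw [← Matrix.det_mul, aux_matSqrt_mul_self hA]
  have hU : IsUnit A.det := hA.det_pos.ne'.isUnit
  rw [← h] at hU
  exact isUnit_of_mul_isUnit_left hU

lemma aux_herCFC_inv (f : ℝ → ℝ) {M : Matrix (Fin n) (Fin n) ℂ} (hM : M.IsHermitian)
    (h0 : ∀ i, hM.eigenvalues i ≠ 0) :
    herCFC (fun x => x * f x⁻¹) M⁻¹ = M⁻¹ * herCFC f M := by
  have hU1 : (hM.eigenvectorUnitary : Matrix (Fin n) (Fin n) ℂ) *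
      star (hM.eigenvectorUnitary : Matrix (Fin n) (Fin n) ℂ) = 1 :=
    Matrix.mem_unitaryGroup_iff.mp hM.eigenvectorUnitary.2
  have hU2 : star (hM.eigenvectorUnitary : Matrix (Fin n) (Fin n) ℂ) *
      (hM.eigenvectorUnitary : Matrix (Fin n) (Fin n) ℂ) = 1 :=
    Matrix.mem_unitaryGroup_iff'.mp hM.eigenvectorUnitary.2
  set U := (hM.eigenvectorUnitary : Matrix (Fin n) (Fin n) ℂ) with hUdef
  have hMinv : M⁻¹ = U * Matrix.diagonal (fun i => (((hM.eigenvalues i)⁻¹ : ℝ) : ℂ)) * star U := by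
    apply Matrix.inv_eq_left_inv
    have hs : M = U * Matrix.diagonal (fun i => ((hM.eigenvalues i : ℝ) : ℂ)) * star U :=
      aux_spectral hM
    refine (congrArg (fun Z => U * Matrix.diagonal (fun i => (((hM.eigenvalues i)⁻¹ : ℝ) : ℂ)) *
      star U * Z) hs).trans ?_
    calc U * Matrix.diagonal (fun i => (((hM.eigenvalues i)⁻¹ : ℝ) : ℂ)) * star U *
          (U * Matrix.diagonal (fun i => ((hM.eigenvalues i : ℝ) : ℂ)) * star U)
        = U * (Matrix.diagonal (fun i => (((hM.eigenvalues i)⁻¹ : ℝ) : ℂ)) * (star U * U) *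
            Matrix.diagonal (fun i => ((hM.eigenvalues i : ℝ) : ℂ))) * star U := by
          simp only [Matrix.mul_assoc]
      _ = U * (Matrix.diagonal (fun i => (((hM.eigenvalues i)⁻¹ : ℝ) : ℂ)) *
            Matrix.diagonal (fun i => ((hM.eigenvalues i : ℝ) : ℂ))) * star U := by
          rw [hU2, mul_one]
      _ = U * (1 : Matrix (Fin n) (Fin n) ℂ) * star U := by
          have he : (fun i => (((hM.eigenvalues i)⁻¹ : ℝ) : ℂ) * ((hM.eigenvalues i : ℝ) : ℂ)) =
              fun _ => (1 : ℂ) := funext fun i => by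
            rw [← Complex.ofReal_mul, inv_mul_cancel₀ (h0 i), Complex.ofReal_one]
          rw [Matrix.diagonal_mul_diagonal, he, Matrix.diagonal_one]
      _ = 1 := by rw [mul_one, hU1]
  rw [hMinv, aux_herCFC_unitary_diag _ _ hU1 hU2, aux_herCFC_of_isHermitian f hM]
  calc U * Matrix.diagonal (fun i => (((hM.eigenvalues i)⁻¹ * f ((hM.eigenvalues i)⁻¹)⁻¹ : ℝ) : ℂ)) * star U
      = U * (Matrix.diagonal (fun i => (((hM.eigenvalues i)⁻¹ : ℝ) : ℂ)) *
          Matrix.diagonal (fun i => ((f (hM.eigenvalues i) : ℝ) : ℂ))) * star U := by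
        have he : (fun i => (((hM.eigenvalues i)⁻¹ : ℝ) : ℂ) * ((f (hM.eigenvalues i) : ℝ) : ℂ)) =
            fun i => (((hM.eigenvalues i)⁻¹ * f ((hM.eigenvalues i)⁻¹)⁻¹ : ℝ) : ℂ) :=
          funext fun i => by rw [← Complex.ofReal_mul, inv_inv]
        rw [Matrix.diagonal_mul_diagonal, he]
    _ = U * Matrix.diagonal (fun i => (((hM.eigenvalues i)⁻¹ : ℝ) : ℂ)) * star U *
          (U * Matrix.diagonal (fun i => ((f (hM.eigenvalues i) : ℝ) : ℂ)) * star U) := by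
        rw [show U * Matrix.diagonal (fun i => (((hM.eigenvalues i)⁻¹ : ℝ) : ℂ)) * star U *
            (U * Matrix.diagonal (fun i => ((f (hM.eigenvalues i) : ℝ) : ℂ)) * star U)
          = U * (Matrix.diagonal (fun i => (((hM.eigenvalues i)⁻¹ : ℝ) : ℂ)) * (star U * U) *
              Matrix.diagonal (fun i => ((f (hM.eigenvalues i) : ℝ) : ℂ))) * star U by
            simp only [Matrix.mul_assoc], hU2, mul_one]

end Aux

/-- `A m_f B = B m_{f'} A` where `f' x = x * f (1/x)` is the transpose of
the operator monotone function `f`. -/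
theorem stmt17 (f : ℝ → ℝ) (hf : OperatorMonotone f)
    {n : ℕ} (A B : Matrix (Fin n) (Fin n) ℂ) (hA : A.PosDef) (hB : B.PosDef) :
    matMean f A B = matMean (fun x => x * f x⁻¹) B A := by
  unfold matMean
  set X := matSqrt A with hXdef
  set Y := matSqrt B with hYdef
  have hXh : X.IsHermitian := aux_matSqrt_isHermitian hA
  have hYh : Y.IsHermitian := aux_matSqrt_isHermitian hB
  have hX2 : X * X = A := aux_matSqrt_mul_self hA
  have hY2 : Y * Y = B := aux_matSqrt_mul_self hB
  have hXd : IsUnit X.det := aux_matSqrt_det_isUnit hA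
  have hYd : IsUnit Y.det := aux_matSqrt_det_isUnit hB
  have hXiX : X⁻¹ * X = 1 := Matrix.nonsing_inv_mul _ hXd
  have hXXi : X * X⁻¹ = 1 := Matrix.mul_nonsing_inv _ hXd
  have hYiY : Y⁻¹ * Y = 1 := Matrix.nonsing_inv_mul _ hYd
  have hYYi : Y * Y⁻¹ = 1 := Matrix.mul_nonsing_inv _ hYd
  have hXs : star X = X := by rw [Matrix.star_eq_conjTranspose, hXh.eq]
  have hYs : star Y = Y := by rw [Matrix.star_eq_conjTranspose, hYh.eq]
  have hXis : star (X⁻¹) = X⁻¹ := by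
    rw [Matrix.star_eq_conjTranspose, Matrix.conjTranspose_nonsing_inv, hXh.eq]
  have hYis : star (Y⁻¹) = Y⁻¹ := by
    rw [Matrix.star_eq_conjTranspose, Matrix.conjTranspose_nonsing_inv, hYh.eq]
  have cX : ∀ Z : Matrix (Fin n) (Fin n) ℂ, X⁻¹ * (X * Z) = Z := fun Z => by
    rw [← Matrix.mul_assoc, hXiX, Matrix.one_mul]
  have cY : ∀ Z : Matrix (Fin n) (Fin n) ℂ, Y * (Y⁻¹ * Z) = Z := fun Z => by
    rw [← Matrix.mul_assoc, hYYi, Matrix.one_mul]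
  set T := Y * X⁻¹ with hT
  set S := X * Y⁻¹ with hS
  have hTS : T * S = 1 := by
    rw [hT, hS, Matrix.mul_assoc, cX, hYYi]
  have hstarT : star T = X⁻¹ * Y := by rw [hT, Matrix.star_mul, hXis, hYs]
  have hstarS : star S = Y⁻¹ * X := by rw [hS, Matrix.star_mul, hYis, hXs]
  set M := X⁻¹ * B * X⁻¹ with hMdef
  have hM : M = star T * T := by
    rw [hstarT, hT, hMdef, ← hY2]
    simp only [Matrix.mul_assoc]
  have hMh : M.IsHermitian := by
    rw [hM, Matrix.star_eq_conjTranspose]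
    exact Matrix.isHermitian_conjTranspose_mul_self T
  have hBd : IsUnit B.det := by rw [← hY2, Matrix.det_mul]; exact hYd.mul hYd
  have hXid : IsUnit (X⁻¹).det := Matrix.isUnit_nonsing_inv_det _ hXd
  have hMdetu : IsUnit M.det := by
    rw [hMdef, Matrix.det_mul, Matrix.det_mul]
    exact (hXid.mul hBd).mul hXid
  have h0 : ∀ i, hMh.eigenvalues i ≠ 0 := by
    intro i hi0
    have hdet := hMh.det_eq_prod_eigenvalues
    rw [Finset.prod_eq_zero (Finset.mem_univ i)
      (by rw [hi0]; exact Complex.ofReal_zero)] at hdet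
    exact hMdetu.ne_zero hdet
  have hstarSS : star S * S = Y⁻¹ * A * Y⁻¹ := by
    rw [hstarS, hS, ← hX2]
    simp only [Matrix.mul_assoc]
  have hSstarS : S * star S = M⁻¹ := by
    symm
    apply Matrix.inv_eq_right_inv
    rw [hstarS, hS, hMdef, ← hY2]
    simp only [Matrix.mul_assoc]
    rw [cX, cY, cY, hXiX]
  have hcomm := aux_herCFC_comm (fun x => x * f x⁻¹) S
  have hkey : herCFC (fun x => x * f x⁻¹) (star S * S)
      = T * (herCFC (fun x => x * f x⁻¹) (S * star S) * S) := by
    calc herCFC (fun x => x * f x⁻¹) (star S * S)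
        = T * (S * herCFC (fun x => x * f x⁻¹) (star S * S)) := by
          rw [← Matrix.mul_assoc T S _, hTS, Matrix.one_mul]
      _ = T * (herCFC (fun x => x * f x⁻¹) (S * star S) * S) := by rw [hcomm]
  have hinv : herCFC (fun x => x * f x⁻¹) M⁻¹ = M⁻¹ * herCFC f M :=
    aux_herCFC_inv f hMh h0
  rw [← hstarSS, hkey, hSstarS, hinv, ← hSstarS, hstarS, hT, hS]
  simp only [Matrix.mul_assoc]
  rw [hYiY, Matrix.mul_one, cX, cY, cY]
end
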